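/- Let n be an odd perfect number with Euler form n = π^α · N², and let A = σ(N²)/π^α. Then at least one of the following holds: (1) A > 1 and 2·N² > 3·π^α; (2) A = 1 and α ≥ ω(n) − 1 and 2·N² > π^α; (3) α ≥ ω(n) − 1 and 2·N² > π^α and 2·N² > 3·π^α. -/

import Mathlib

open ArithmeticFunction Finset

theorem stmt_5 (n N p a : ℕ) (hn : 0 < n) (hN : 0 < N) (hodd : Odd n)
    (hperf : ArithmeticFunction.sigma 1 n = 2 * n)
    (hp : p.Prime) (hp4 : p % 4 = 1) (ha4 : a % 4 = 1)
    (hcop : Nat.Coprime p N) (hform : n = p ^ a * N ^ 2) :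
    (ArithmeticFunction.sigma 1 (N ^ 2) / p ^ a > 1 ∧ 2 * N ^ 2 > 3 * p ^ a) ∨ (ArithmeticFunction.sigma 1 (N ^ 2) / p ^ a = 1 ∧ a ≥ n.primeFactors.card - 1 ∧ 2 * N ^ 2 > p ^ a) ∨ (a ≥ n.primeFactors.card - 1 ∧ 2 * N ^ 2 > p ^ a ∧ 2 * N ^ 2 > 3 * p ^ a) := by
  have ha1 : 1 ≤ a := by omega
  have hp2 : 2 ≤ p := hp.two_le
  have hppos : 0 < p ^ a := pow_pos hp.pos a
  set s := ArithmeticFunction.sigma 1 (p ^ a) with hs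
  set t := ArithmeticFunction.sigma 1 (N ^ 2) with ht
  have hmul : s * t = 2 * (p ^ a * N ^ 2) := by
    rw [hs, ht, ← isMultiplicative_sigma.map_mul_of_coprime (Nat.Coprime.pow a 2 hcop),
      ← hform, hperf, hform]
  have hssum : s = ∑ k ∈ Finset.range (a + 1), p ^ k := by
    rw [hs, sigma_one_apply_prime_pow hp]
  have hps : ¬ p ∣ s := by
    intro hdvd
    have h1 : s = p * (∑ i ∈ Finset.range a, p ^ i) + 1 := by
      rw [hssum, Finset.sum_range_succ']
      simp [Finset.mul_sum, pow_succ, mul_comm]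
    have : p ∣ 1 := (Nat.dvd_add_right ⟨_, rfl⟩).mp (h1 ▸ hdvd)
    exact Nat.Prime.one_lt hp |>.ne' (Nat.dvd_one.mp this)
  have hcops : Nat.Coprime (p ^ a) s :=
    (Nat.Prime.coprime_iff_not_dvd hp |>.mpr hps).pow_left a
  have hdvdst : p ^ a ∣ s * t := by
    rw [hmul]; exact Dvd.dvd.mul_left (dvd_mul_right (p ^ a) (N ^ 2)) 2
  have hdvdt : p ^ a ∣ t := (Nat.Coprime.dvd_of_dvd_mul_left hcops) hdvdst
  obtain ⟨A, hA⟩ := hdvdt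
  have hAdiv : t / p ^ a = A := by rw [hA, Nat.mul_div_cancel_left _ hppos]
  have hsA : s * A = 2 * N ^ 2 := by
    have hkey : p ^ a * (s * A) = p ^ a * (2 * N ^ 2) := by
      calc p ^ a * (s * A) = s * (p ^ a * A) := by ring
        _ = 2 * (p ^ a * N ^ 2) := by rw [← hA]; exact hmul
        _ = p ^ a * (2 * N ^ 2) := by ring
    exact Nat.eq_of_mul_eq_mul_left hppos hkey
  have htpos : 0 < t := by
    rw [ht, sigma_one_apply]
    exact Finset.sum_pos (fun i hi => Nat.pos_of_mem_divisors hi)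
      ⟨1, Nat.one_mem_divisors.mpr (pow_ne_zero 2 hN.ne')⟩
  have hApos : 0 < A := by
    rcases Nat.eq_zero_or_pos A with h | h
    · rw [h, mul_zero] at hA; omega
    · exact h
  have hsmod : s % 4 = 2 := by
    have hpk : ∀ k, p ^ k % 4 = 1 := fun k => by
      rw [Nat.pow_mod, hp4, one_pow]; rfl
    have hcongr : (∑ k ∈ Finset.range (a + 1), p ^ k % 4) =
        ∑ _k ∈ Finset.range (a + 1), 1 := Finset.sum_congr rfl (fun k _ => hpk k)
    rw [hssum, Finset.sum_nat_mod, hcongr, Finset.sum_const, Finset.card_range,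
      smul_eq_mul, mul_one]
    omega
  have hNodd : Odd N := by
    rcases Nat.even_or_odd N with h | h
    · exfalso
      have : 2 ∣ n := by
        rw [hform]
        exact Dvd.dvd.mul_left (dvd_pow h.two_dvd two_ne_zero) _
      exact (Nat.not_even_iff_odd.mpr hodd) (even_iff_two_dvd.mpr this)
    · exact h
  have hAodd : Odd A := by
    obtain ⟨m, hm⟩ : ∃ m, s = 2 * m := ⟨s / 2, by omega⟩
    have hmA : m * A = N ^ 2 := by
      have : 2 * (m * A) = 2 * N ^ 2 := by rw [← hsA, hm]; ring
      omega
    have : Odd (N ^ 2) := hNodd.pow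
    rw [← hmA] at this
    exact Nat.Odd.of_mul_right this
  have hsgt : p ^ a < s := by
    have h1 : 1 ≤ ∑ k ∈ Finset.range a, p ^ k := by
      have := Finset.single_le_sum (f := fun k => p ^ k)
        (fun i _ => Nat.zero_le _) (Finset.mem_range.mpr ha1)
      simpa using this
    rw [hssum, Finset.sum_range_succ]
    omega
  -- bound on number of prime factors of n
  have hcard : n.primeFactors.card ≤ N.primeFactors.card + 1 := by
    rw [hform]
    calc (p ^ a * N ^ 2).primeFactors.card
        ≤ ((p ^ a).primeFactors ∪ (N ^ 2).primeFactors).card := by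
          apply Finset.card_le_card
          rw [Nat.primeFactors_mul (pow_ne_zero a hp.pos.ne') (pow_ne_zero 2 hN.ne')]
      _ ≤ (p ^ a).primeFactors.card + (N ^ 2).primeFactors.card := Finset.card_union_le _ _
      _ ≤ 1 + N.primeFactors.card := by
          rw [Nat.primeFactors_pow _ (two_ne_zero), Nat.primeFactors_prime_pow (by omega) hp]
          simp
      _ = N.primeFactors.card + 1 := by ring
  rcases eq_or_lt_of_le (show 1 ≤ A from hApos) with hA1 | hA2
  · -- A = 1 case
    have hA1 : A = 1 := hA1.symm
    have ht' : t = p ^ a := by rw [hA, hA1, mul_one]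
    have h2N : 2 * N ^ 2 > p ^ a := by
      rw [← hsA, hA1, mul_one]; exact hsgt
    have hN2 : (N ^ 2 : ℕ) ≠ 0 := pow_ne_zero 2 hN.ne'
    have hpf2 : (N ^ 2).primeFactors = N.primeFactors := Nat.primeFactors_pow N two_ne_zero
    have hfac : p ^ a = ∏ q ∈ N.primeFactors,
        ArithmeticFunction.sigma 1 (q ^ (N ^ 2).factorization q) := by
      have h := isMultiplicative_sigma.multiplicative_factorization
        (ArithmeticFunction.sigma 1) hN2
      rw [Nat.prod_factorization_eq_prod_primeFactors, hpf2] at h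
      rw [← h, ← ht, ht']
    have key : ∀ q ∈ N.primeFactors,
        p ≤ ArithmeticFunction.sigma 1 (q ^ (N ^ 2).factorization q) := by
      intro q hq
      have hqp : q.Prime := Nat.prime_of_mem_primeFactors hq
      have hdvd : ArithmeticFunction.sigma 1 (q ^ (N ^ 2).factorization q) ∣ p ^ a := by
        rw [hfac]; exact Finset.dvd_prod_of_mem _ hq
      have hk1 : 1 ≤ (N ^ 2).factorization q := by
        have : q ∈ (N ^ 2).primeFactors := hpf2 ▸ hq
        exact (Nat.Prime.factorization_pos_of_dvd hqp hN2
          (Nat.dvd_of_mem_primeFactors this))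
      have hgt1 : 1 < ArithmeticFunction.sigma 1 (q ^ (N ^ 2).factorization q) := by
        have hqk : 2 ≤ q ^ (N ^ 2).factorization q :=
          le_trans hqp.two_le (Nat.le_self_pow (by omega) q)
        have hle : q ^ (N ^ 2).factorization q ≤
            ArithmeticFunction.sigma 1 (q ^ (N ^ 2).factorization q) := by
          rw [sigma_one_apply]
          exact Finset.single_le_sum (f := fun d => d) (fun i _ => Nat.zero_le _)
            (Nat.mem_divisors_self _ (pow_ne_zero _ hqp.pos.ne'))
        omega
      obtain ⟨j, hj, hje⟩ := (Nat.dvd_prime_pow hp).mp hdvd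
      have hj1 : 1 ≤ j := by
        by_contra h
        rw [Nat.not_le, Nat.lt_one_iff] at h
        rw [h, pow_zero] at hje
        omega
      calc p = p ^ 1 := (pow_one p).symm
        _ ≤ p ^ j := Nat.pow_le_pow_right hp.pos hj1
        _ = _ := hje.symm
    have hω : N.primeFactors.card ≤ a := by
      have hle : p ^ N.primeFactors.card ≤ p ^ a := by
        calc p ^ N.primeFactors.card = ∏ _q ∈ N.primeFactors, p := by
              rw [Finset.prod_const]
          _ ≤ ∏ q ∈ N.primeFactors,
              ArithmeticFunction.sigma 1 (q ^ (N ^ 2).factorization q) :=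
            Finset.prod_le_prod (fun _ _ => Nat.zero_le _) key
          _ = p ^ a := hfac.symm
      exact (Nat.pow_le_pow_iff_right (by omega)).mp hle
    exact Or.inr (Or.inl ⟨by rw [hAdiv, hA1], by omega, h2N⟩)
  · -- A ≥ 2, so A ≥ 3 by oddness
    have hA3 : 3 ≤ A := by
      rcases hAodd with ⟨k, hk⟩; omega
    have h3 : 3 * p ^ a < 2 * N ^ 2 := by
      calc 3 * p ^ a < 3 * s := by
            exact (Nat.mul_lt_mul_left (by norm_num)).mpr hsgt
        _ ≤ A * s := Nat.mul_le_mul_right s hA3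
        _ = 2 * N ^ 2 := by rw [mul_comm]; exact hsA
    exact Or.inl ⟨by rw [hAdiv]; omega, h3⟩
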